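/- Let (g,f) be an involution in the Riordan group, i.e., f(f(x)) = x and g(x)·g(f(x)) = 1. Then the almost Riordan array (a; g, f) with a(x) = x·g(x)/f(x) is an involution in the group of almost Riordan arrays of order 1. -/

import Mathlib

open PowerSeries

/-- Composition f ∘ g of formal power series (intended for g with zero constant term). -/
noncomputable def comp (f g : ℚ⟦X⟧) : ℚ⟦X⟧ :=
  PowerSeries.mk fun n => ∑ k ∈ Finset.range (n + 1),
    PowerSeries.coeff k f * PowerSeries.coeff n (g ^ k)

/-- (f(x) - f(0))/x. -/
noncomputable def shift (f : ℚ⟦X⟧) : ℚ⟦X⟧ := PowerSeries.mk fun n => PowerSeries.coeff (n + 1) f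

/-- Action of the almost Riordan array (a; g, f) on a power series b. -/
noncomputable def aact (a g f b : ℚ⟦X⟧) : ℚ⟦X⟧ :=
  PowerSeries.C (PowerSeries.constantCoeff b) * a + PowerSeries.X * g * comp (shift b) f

/-- Product in the group of almost Riordan arrays of order 1 (triples (a; g, f)). -/
noncomputable def amul (M N : ℚ⟦X⟧ × ℚ⟦X⟧ × ℚ⟦X⟧) : ℚ⟦X⟧ × ℚ⟦X⟧ × ℚ⟦X⟧ :=
  (aact M.1 M.2.1 M.2.2 N.1, M.2.1 * comp N.2.1 M.2.2, comp N.2.2 M.2.2)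

/-- Product in the Riordan group (pairs (g, f)). -/
noncomputable def rmul (M N : ℚ⟦X⟧ × ℚ⟦X⟧) : ℚ⟦X⟧ × ℚ⟦X⟧ :=
  (M.1 * comp N.1 M.2, comp N.2 M.2)

lemma coeff_pow_eq_zero {f : ℚ⟦X⟧} (hf : constantCoeff f = 0) {n k : ℕ} (h : n < k) :
    coeff n (f ^ k) = 0 := by
  have hX : (X : ℚ⟦X⟧) ∣ f := X_dvd_iff.mpr hf
  have hd : (X : ℚ⟦X⟧) ^ k ∣ f ^ k := pow_dvd_pow_of_dvd hX k
  exact (X_pow_dvd_iff.mp hd) n h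

lemma coeff_comp {f : ℚ⟦X⟧} (hf : constantCoeff f = 0) (p : ℚ⟦X⟧) {n m : ℕ} (h : n < m) :
    coeff n (comp p f) = ∑ k ∈ Finset.range m, coeff k p * coeff n (f ^ k) := by
  rw [comp, coeff_mk]
  apply Finset.sum_subset
  · intro x hx; simp only [Finset.mem_range] at *; omega
  · intro k hk hknot
    simp only [Finset.mem_range] at hk hknot
    rw [coeff_pow_eq_zero hf (by omega), mul_zero]

lemma comp_add (p q f : ℚ⟦X⟧) : comp (p + q) f = comp p f + comp q f := by
  ext n; simp [comp, add_mul, Finset.sum_add_distrib]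

lemma comp_C (c : ℚ) (f : ℚ⟦X⟧) : comp (C c) f = C c := by
  ext n
  rw [comp, coeff_mk, Finset.sum_eq_single 0]
  · simp [coeff_C]
  · intro k _ hk; simp [coeff_C, hk]
  · intro h; simp at h

lemma comp_X {f : ℚ⟦X⟧} (hf : constantCoeff f = 0) : comp X f = f := by
  ext n
  rw [comp, coeff_mk]
  rcases n with _ | n
  · simpa [coeff_X] using hf.symm
  · rw [Finset.sum_eq_single 1]
    · simp
    · intro k _ hk; simp [coeff_X, hk]
    · intro h; simp at h

lemma comp_mul {f : ℚ⟦X⟧} (hf : constantCoeff f = 0) (p q : ℚ⟦X⟧) :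
    comp (p * q) f = comp p f * comp q f := by
  ext n
  rw [coeff_mul, coeff_comp hf _ (Nat.lt_succ_self n)]
  have hR : ∑ st ∈ Finset.HasAntidiagonal.antidiagonal n, coeff st.1 (comp p f) * coeff st.2 (comp q f)
      = ∑ ij ∈ Finset.range (n + 1) ×ˢ Finset.range (n + 1),
          coeff ij.1 p * coeff ij.2 q * coeff n (f ^ (ij.1 + ij.2)) := by
    have step : ∀ st ∈ Finset.HasAntidiagonal.antidiagonal n,
        coeff st.1 (comp p f) * coeff st.2 (comp q f)
        = ∑ ij ∈ Finset.range (n + 1) ×ˢ Finset.range (n + 1),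
            coeff ij.1 p * coeff ij.2 q * (coeff st.1 (f ^ ij.1) * coeff st.2 (f ^ ij.2)) := by
      intro st hst
      rw [Finset.HasAntidiagonal.mem_antidiagonal] at hst
      rw [coeff_comp hf p (show st.1 < n + 1 by omega),
          coeff_comp hf q (show st.2 < n + 1 by omega), Finset.sum_mul_sum]
      rw [Finset.sum_product]
      apply Finset.sum_congr rfl; intro i _
      apply Finset.sum_congr rfl; intro j _
      ring
    rw [Finset.sum_congr rfl step, Finset.sum_comm]
    apply Finset.sum_congr rfl
    intro ij _
    rw [← Finset.mul_sum, pow_add, coeff_mul]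
  rw [hR]
  -- LHS
  have hL : ∑ k ∈ Finset.range (n + 1), coeff k (p * q) * coeff n (f ^ k)
      = ∑ ij ∈ Finset.range (n + 1) ×ˢ Finset.range (n + 1),
          coeff ij.1 p * coeff ij.2 q * coeff n (f ^ (ij.1 + ij.2)) := by
    have e1 : ∀ k ∈ Finset.range (n + 1), coeff k (p * q) * coeff n (f ^ k)
        = ∑ ij ∈ Finset.HasAntidiagonal.antidiagonal k,
            coeff ij.1 p * coeff ij.2 q * coeff n (f ^ (ij.1 + ij.2)) := by
      intro k _
      rw [coeff_mul, Finset.sum_mul]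
      apply Finset.sum_congr rfl
      intro ij hij
      rw [Finset.HasAntidiagonal.mem_antidiagonal] at hij
      rw [hij]
    rw [Finset.sum_congr rfl e1, ← Finset.sum_biUnion]
    · apply Finset.sum_subset
      · intro ij hij
        simp only [Finset.mem_biUnion, Finset.mem_range, Finset.HasAntidiagonal.mem_antidiagonal] at hij
        obtain ⟨k, hk, hsum⟩ := hij
        simp only [Finset.mem_product, Finset.mem_range]
        omega
      · intro ij hij hnot
        simp only [Finset.mem_biUnion, Finset.mem_range, Finset.HasAntidiagonal.mem_antidiagonal] at hnot
        simp only [Finset.mem_product, Finset.mem_range] at hij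
        push_neg at hnot
        have : n < ij.1 + ij.2 := by
          by_contra hc
          exact absurd rfl (hnot (ij.1 + ij.2) (by omega))
        rw [coeff_pow_eq_zero hf this, mul_zero]
    · intro x hx y hy hxy
      simp only [Finset.coe_range, Set.mem_Iio] at hx hy
      simp only [Function.onFun]
      rw [Finset.disjoint_left]
      intro ij h1 h2
      rw [Finset.HasAntidiagonal.mem_antidiagonal] at h1 h2
      exact hxy (by omega)
  rw [hL]

lemma shift_decomp (p : ℚ⟦X⟧) : p = C (constantCoeff p) + X * shift p := by
  ext n
  rcases n with _ | n
  · simp [shift, coeff_C]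
  · simp [shift, coeff_C, PowerSeries.coeff_succ_X_mul]

/-- If (g,f) is a Riordan involution (f∘f = x and g·(g∘f) = 1), then the almost Riordan
array (a; g, f) with a = x·g/f is an involution in the group of almost Riordan arrays
of order 1. -/
theorem almost_involution (g f a : ℚ⟦X⟧)
    (hg0 : PowerSeries.constantCoeff g = 1)
    (hf0 : PowerSeries.constantCoeff f = 0)
    (hff : comp f f = X) (hgg : g * comp g f = 1)
    (ha : a * f = X * g) :
    amul (a, g, f) (a, g, f) = (1, 1, X) := by
  have hfne : f ≠ 0 := by
    intro h
    rw [h, mul_zero] at ha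
    have hg : g = 0 := by
      rcases mul_eq_zero.mp ha.symm with h1 | h1
      · exact absurd h1 X_ne_zero
      · exact h1
    rw [hg, zero_mul] at hgg
    exact zero_ne_one hgg
  set a₀ := constantCoeff a with ha₀
  set A := shift a with hA
  have h1 : a = C a₀ + X * A := shift_decomp a
  have h2 : comp a f = C a₀ + f * comp A f := by
    conv_lhs => rw [h1]
    rw [comp_add, comp_C, comp_mul hf0, comp_X hf0]
  have h3 : comp a f * X = f * comp g f := by
    rw [← hff, ← comp_mul hf0, ha, comp_mul hf0, comp_X hf0]
  have h5 : (C a₀ + f * comp A f) * X = f * comp g f := by rw [← h2]; exact h3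
  have key : (C a₀ * a + X * g * comp A f) * f = 1 * f := by
    linear_combination g * h5 + C a₀ * ha + f * hgg
  have h6 : C a₀ * a + X * g * comp A f = 1 := mul_right_cancel₀ hfne key
  simp only [amul, aact, Prod.mk.injEq]
  exact ⟨h6, hgg, hff⟩
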